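/- Fix p ∈ [1,∞). Let ρ ∈ P(X₁×X₂) with marginals ρ₁, ρ₂, let μ₁ ∈ P(X₁), μ₂ ∈ P(X₂), and let S(ρ;μ₁,μ₂) be any shadow of ρ onto Π(μ₁,μ₂). Then S(ρ;μ₁,μ₂) ∈ Π(μ₁,μ₂) and W_p(S(ρ;μ₁,μ₂), ρ) = (W_p^p(μ₁,ρ₁) + W_p^p(μ₂,ρ₂))^{1/p} = min{ W_p(π, ρ) : π ∈ Π(μ₁,μ₂) }; in particular every shadow of ρ onto Π(μ₁,μ₂) attains the minimum of π ↦ W_p(π,ρ) over Π(μ₁,μ₂). -/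

import Mathlib

open MeasureTheory ProbabilityTheory
open scoped ENNReal

set_option maxHeartbeats 1000000
noncomputable section

abbrev Vec (n : ℕ) : Type := Fin n → ℝ

/-- ℓ_p distance on ℝ^n. -/
def lpDist (p : ℝ) {n : ℕ} (x y : Vec n) : ℝ := (∑ i, |x i - y i| ^ p) ^ (1 / p)

/-- product metric d_p on ℝ^{d₁} × ℝ^{d₂}. -/
def prodDist (p : ℝ) {n m : ℕ} (x y : Vec n × Vec m) : ℝ :=
  (lpDist p x.1 y.1 ^ p + lpDist p x.2 y.2 ^ p) ^ (1 / p)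

/-- γ is a coupling of α and β. -/
def IsCoupling {E : Type*} [MeasurableSpace E] (γ : Measure (E × E)) (α β : Measure E) : Prop :=
  IsProbabilityMeasure γ ∧ γ.map Prod.fst = α ∧ γ.map Prod.snd = β

/-- p-Wasserstein distance (p < ∞) w.r.t. a cost/metric c. -/
def Wp {E : Type*} [MeasurableSpace E] (p : ℝ) (c : E → E → ℝ) (α β : Measure E) : ℝ :=
  sInf ((fun γ : Measure (E × E) => (∫ z, c z.1 z.2 ^ p ∂γ) ^ (1 / p)) '' {γ | IsCoupling γ α β})

/-- ∞-Wasserstein distance w.r.t. a cost/metric c. -/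
def Winf {E : Type*} [MeasurableSpace E] (c : E → E → ℝ) (α β : Measure E) : ℝ :=
  sInf ((fun γ : Measure (E × E) => essSup (fun z => c z.1 z.2) γ) '' {γ | IsCoupling γ α β})

/-- q-Wasserstein distance for q ∈ [1,∞]. -/
def Wq {E : Type*} [MeasurableSpace E] (q : ℝ≥0∞) (c : E → E → ℝ) (α β : Measure E) : ℝ :=
  if q = ∞ then Winf c α β else Wp q.toReal c α β

/-- μ is a Borel probability measure concentrated on X. -/
def ProbOn {E : Type*} [MeasurableSpace E] (μ : Measure E) (X : Set E) : Prop :=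
  IsProbabilityMeasure μ ∧ μ Xᶜ = 0

/-- ρ is absolutely continuous with Lebesgue density bounded above and below by strictly
positive constants on X, and vanishing off X. -/
def NiceDensityOn {E : Type*} [MeasureSpace E] (ρ : Measure E) (X : Set E) : Prop :=
  ∃ (f : E → ℝ≥0∞) (c₁ c₂ : ℝ≥0∞), 0 < c₁ ∧ c₂ < ∞ ∧ ρ = volume.withDensity f ∧
    (∀ x ∈ X, c₁ ≤ f x ∧ f x ≤ c₂) ∧ (∀ x ∉ X, f x = 0)

/-- T is an optimal transport map from α to β for W_p w.r.t. cost c. -/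
def IsOptMap {E : Type*} [MeasurableSpace E] (p : ℝ) (c : E → E → ℝ) (α β : Measure E)
    (T : E → E) : Prop :=
  Measurable T ∧ α.map T = β ∧ (∫ x, c x (T x) ^ p ∂α) ^ (1 / p) = Wp p c α β

/-- Π(μ₁, μ₂): couplings of μ₁ and μ₂. -/
def Pi2 {d₁ d₂ : ℕ} (μ₁ : Measure (Vec d₁)) (μ₂ : Measure (Vec d₂)) :
    Set (Measure (Vec d₁ × Vec d₂)) :=
  {π | IsProbabilityMeasure π ∧ π.map Prod.fst = μ₁ ∧ π.map Prod.snd = μ₂}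

/-- S is a shadow of ρ onto Π(μ₁,μ₂) for the p-Wasserstein distance. -/
def IsShadow2 (p : ℝ) {d₁ d₂ : ℕ} (ρ : Measure (Vec d₁ × Vec d₂))
    (μ₁ : Measure (Vec d₁)) (μ₂ : Measure (Vec d₂)) (S : Measure (Vec d₁ × Vec d₂)) : Prop :=
  ∃ (κ₁ : Kernel (Vec d₁) (Vec d₁)) (κ₂ : Kernel (Vec d₂) (Vec d₂)),
    IsMarkovKernel κ₁ ∧ IsMarkovKernel κ₂ ∧
    (∃ γ₁ : Measure (Vec d₁ × Vec d₁),
      (∀ A, MeasurableSet A → γ₁ A = ∫⁻ y, κ₁ y {x | (x, y) ∈ A} ∂(ρ.map Prod.fst)) ∧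
      IsCoupling γ₁ μ₁ (ρ.map Prod.fst) ∧
      (∫ z, lpDist p z.1 z.2 ^ p ∂γ₁) ^ (1 / p) = Wp p (lpDist p) μ₁ (ρ.map Prod.fst)) ∧
    (∃ γ₂ : Measure (Vec d₂ × Vec d₂),
      (∀ A, MeasurableSet A → γ₂ A = ∫⁻ y, κ₂ y {x | (x, y) ∈ A} ∂(ρ.map Prod.snd)) ∧
      IsCoupling γ₂ μ₂ (ρ.map Prod.snd) ∧
      (∫ z, lpDist p z.1 z.2 ^ p ∂γ₂) ^ (1 / p) = Wp p (lpDist p) μ₂ (ρ.map Prod.snd)) ∧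
    (∀ A : Set (Vec d₁ × Vec d₂), MeasurableSet A →
      S A = ∫⁻ y, ((κ₁ y.1).prod (κ₂ y.2)) A ∂ρ)

/-- d_{X,p}: product metric on a K-fold product of Euclidean spaces. -/
def piDist (p : ℝ) {K : ℕ} {d : Fin K → ℕ} (x y : (i : Fin K) → Vec (d i)) : ℝ :=
  (∑ i, lpDist p (x i) (y i) ^ p) ^ (1 / p)

/-- S is a shadow of ρ onto Π(μ₁,…,μ_K) for the p-Wasserstein distance. -/
def IsShadowK (p : ℝ) {K : ℕ} {d : Fin K → ℕ} (ρ : Measure ((i : Fin K) → Vec (d i)))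
    (μ : (i : Fin K) → Measure (Vec (d i))) (S : Measure ((i : Fin K) → Vec (d i))) : Prop :=
  ∃ κ : (i : Fin K) → Kernel (Vec (d i)) (Vec (d i)),
    (∀ i, IsMarkovKernel (κ i)) ∧
    (∀ i, ∃ γ : Measure (Vec (d i) × Vec (d i)),
      (∀ A, MeasurableSet A → γ A = ∫⁻ y, κ i y {x | (x, y) ∈ A} ∂(ρ.map fun z => z i)) ∧
      IsCoupling γ (μ i) (ρ.map fun z => z i) ∧
      (∫ z, lpDist p z.1 z.2 ^ p ∂γ) ^ (1 / p) = Wp p (lpDist p) (μ i) (ρ.map fun z => z i)) ∧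
    (∀ A, MeasurableSet A → S A = ∫⁻ y, Measure.pi (fun i => κ i (y i)) A ∂ρ)



section ShadowAux

variable {p : ℝ}

lemma lp_nonneg {n : ℕ} (p : ℝ) (x y : Vec n) : 0 ≤ lpDist p x y :=
  Real.rpow_nonneg (Finset.sum_nonneg fun _ _ => Real.rpow_nonneg (abs_nonneg _) _) _

lemma lp_cont' {n : ℕ} (hp : 0 ≤ p) {α : Type*} [TopologicalSpace α]
    {f g : α → Vec n} (hf : Continuous f) (hg : Continuous g) :
    Continuous (fun a => lpDist p (f a) (g a)) := by
  unfold lpDist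
  refine Continuous.rpow_const ?_ (fun _ => Or.inr (by positivity))
  refine continuous_finset_sum _ (fun i _ => Continuous.rpow_const ?_ (fun _ => Or.inr hp))
  exact (((continuous_apply i).comp hf).sub ((continuous_apply i).comp hg)).abs

lemma rpow_invp (hp : 1 ≤ p) {a : ℝ} (ha : 0 ≤ a) : (a ^ (1/p)) ^ p = a := by
  have hp0 : p ≠ 0 := by positivity
  rw [← Real.rpow_mul ha, one_div_mul_cancel hp0, Real.rpow_one]

lemma cost_split (hp : 1 ≤ p) {n m : ℕ} (x y : Vec n × Vec m) :
    prodDist p x y ^ p = lpDist p x.1 y.1 ^ p + lpDist p x.2 y.2 ^ p := by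
  unfold prodDist
  exact rpow_invp hp (add_nonneg (Real.rpow_nonneg (lp_nonneg _ _ _) _)
    (Real.rpow_nonneg (lp_nonneg _ _ _) _))

lemma wp_set_nonneg {E : Type*} [MeasurableSpace E] {c : E → E → ℝ} (hc : ∀ x y, 0 ≤ c x y)
    {α β : Measure E} :
    ∀ b ∈ ((fun γ : Measure (E × E) => (∫ z, c z.1 z.2 ^ p ∂γ) ^ (1 / p)) ''
      {γ | IsCoupling γ α β}), 0 ≤ b := by
  rintro b ⟨γ, -, rfl⟩
  exact Real.rpow_nonneg (integral_nonneg fun z => Real.rpow_nonneg (hc _ _) _) _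

lemma wp_bddBelow {E : Type*} [MeasurableSpace E] {c : E → E → ℝ} (hc : ∀ x y, 0 ≤ c x y)
    {α β : Measure E} :
    BddBelow ((fun γ : Measure (E × E) => (∫ z, c z.1 z.2 ^ p ∂γ) ^ (1 / p)) ''
      {γ | IsCoupling γ α β}) :=
  ⟨0, fun b hb => wp_set_nonneg hc b hb⟩

lemma wp_nonneg' {E : Type*} [MeasurableSpace E] {c : E → E → ℝ} (hc : ∀ x y, 0 ≤ c x y)
    (α β : Measure E) : 0 ≤ Wp p c α β :=
  Real.sInf_nonneg (wp_set_nonneg hc)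

/-- concentration of a joint measure given marginal concentration -/
lemma conc {A B : Type*} [MeasurableSpace A] [MeasurableSpace B]
    (π : Measure (A × B)) {ν₁ : Measure A} {ν₂ : Measure B}
    (h1 : π.map Prod.fst = ν₁) (h2 : π.map Prod.snd = ν₂)
    {Sa : Set A} {Sb : Set B} (hSa : MeasurableSet Sa) (hSb : MeasurableSet Sb)
    (hν₁ : ν₁ Saᶜ = 0) (hν₂ : ν₂ Sbᶜ = 0) : π (Sa ×ˢ Sb)ᶜ = 0 := by
  have hsub : (Sa ×ˢ Sb)ᶜ ⊆ (Prod.fst ⁻¹' Saᶜ) ∪ (Prod.snd ⁻¹' Sbᶜ) := by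
    intro z hz
    simp only [Set.mem_compl_iff, Set.mem_prod, not_and_or] at hz
    simpa using hz
  refine measure_mono_null hsub (measure_union_null ?_ ?_)
  · rw [← Measure.map_apply measurable_fst hSa.compl, h1]; exact hν₁
  · rw [← Measure.map_apply measurable_snd hSb.compl, h2]; exact hν₂

lemma integrable_of_conc {E : Type*} [MeasurableSpace E] (γ : Measure E) [IsFiniteMeasure γ]
    {f : E → ℝ} (hf : AEStronglyMeasurable f γ) {M : Set E} (hγ : γ Mᶜ = 0) {C : ℝ}
    (hC : ∀ x ∈ M, ‖f x‖ ≤ C) : Integrable f γ := by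
  refine (integrable_const C).mono' hf ?_
  exact Filter.eventually_of_mem (by rw [mem_ae_iff]; exact hγ) hC

/-- splitting of the cost integral for measures concentrated on a compact product -/
lemma cost_int_split {d₁ d₂ : ℕ} {X₁ : Set (Vec d₁)} {X₂ : Set (Vec d₂)}
    (hX₁c : IsCompact X₁) (hX₂c : IsCompact X₂) (hp : 1 ≤ p)
    {γ : Measure ((Vec d₁ × Vec d₂) × (Vec d₁ × Vec d₂))}
    {π ρ : Measure (Vec d₁ × Vec d₂)}
    (hγ : IsCoupling γ π ρ)
    (hπM : π (X₁ ×ˢ X₂)ᶜ = 0) (hρM : ρ (X₁ ×ˢ X₂)ᶜ = 0) :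
    (∫ z, prodDist p z.1 z.2 ^ p ∂γ =
      (∫ z, lpDist p z.1.1 z.2.1 ^ p ∂γ) + ∫ z, lpDist p z.1.2 z.2.2 ^ p ∂γ) ∧
    Integrable (fun z => lpDist p z.1.1 z.2.1 ^ p) γ ∧
    Integrable (fun z => lpDist p z.1.2 z.2.2 ^ p) γ := by
  have hp0 : (0:ℝ) ≤ p := le_trans zero_le_one hp
  haveI : IsProbabilityMeasure γ := hγ.1
  have hM : MeasurableSet (X₁ ×ˢ X₂) :=
    (hX₁c.isClosed.measurableSet).prod (hX₂c.isClosed.measurableSet)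
  have hγconc : γ ((X₁ ×ˢ X₂) ×ˢ (X₁ ×ˢ X₂))ᶜ = 0 :=
    conc γ hγ.2.1 hγ.2.2 hM hM hπM hρM
  have hc₁ : Continuous (fun z : (Vec d₁ × Vec d₂) × (Vec d₁ × Vec d₂) =>
      lpDist p z.1.1 z.2.1 ^ p) :=
    Continuous.rpow_const (lp_cont' hp0 (continuous_fst.fst) (continuous_snd.fst))
      (fun _ => Or.inr hp0)
  have hc₂ : Continuous (fun z : (Vec d₁ × Vec d₂) × (Vec d₁ × Vec d₂) =>
      lpDist p z.1.2 z.2.2 ^ p) :=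
    Continuous.rpow_const (lp_cont' hp0 (continuous_fst.snd) (continuous_snd.snd))
      (fun _ => Or.inr hp0)
  have hF : Continuous (fun z : (Vec d₁ × Vec d₂) × (Vec d₁ × Vec d₂) =>
      lpDist p z.1.1 z.2.1 ^ p + lpDist p z.1.2 z.2.2 ^ p) := hc₁.add hc₂
  obtain ⟨C, hC⟩ := ((hX₁c.prod hX₂c).prod (hX₁c.prod hX₂c)).exists_bound_of_continuousOn
    hF.continuousOn
  have hb₁ : ∀ z ∈ (X₁ ×ˢ X₂) ×ˢ (X₁ ×ˢ X₂), ‖lpDist p z.1.1 z.2.1 ^ p‖ ≤ C := by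
    intro z hz
    have h := hC z hz
    have h1 : (0:ℝ) ≤ lpDist p z.1.1 z.2.1 ^ p := Real.rpow_nonneg (lp_nonneg _ _ _) _
    have h2 : (0:ℝ) ≤ lpDist p z.1.2 z.2.2 ^ p := Real.rpow_nonneg (lp_nonneg _ _ _) _
    rw [Real.norm_of_nonneg (add_nonneg h1 h2)] at h
    rw [Real.norm_of_nonneg h1]
    linarith
  have hb₂ : ∀ z ∈ (X₁ ×ˢ X₂) ×ˢ (X₁ ×ˢ X₂), ‖lpDist p z.1.2 z.2.2 ^ p‖ ≤ C := by
    intro z hz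
    have h := hC z hz
    have h1 : (0:ℝ) ≤ lpDist p z.1.1 z.2.1 ^ p := Real.rpow_nonneg (lp_nonneg _ _ _) _
    have h2 : (0:ℝ) ≤ lpDist p z.1.2 z.2.2 ^ p := Real.rpow_nonneg (lp_nonneg _ _ _) _
    rw [Real.norm_of_nonneg (add_nonneg h1 h2)] at h
    rw [Real.norm_of_nonneg h2]
    linarith
  have hi₁ := integrable_of_conc γ hc₁.aestronglyMeasurable hγconc hb₁
  have hi₂ := integrable_of_conc γ hc₂.aestronglyMeasurable hγconc hb₂
  refine ⟨?_, hi₁, hi₂⟩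
  calc ∫ z, prodDist p z.1 z.2 ^ p ∂γ
      = ∫ z, (lpDist p z.1.1 z.2.1 ^ p + lpDist p z.1.2 z.2.2 ^ p) ∂γ := by
        apply integral_congr_ae
        filter_upwards with z
        exact cost_split hp _ _
    _ = _ := integral_add hi₁ hi₂

/-- pushing a coupling of π and ρ to the i-th coordinates gives a coupling of the marginals,
and the lower bound on the cost follows. -/
lemma lower_bound {d₁ d₂ : ℕ} {X₁ : Set (Vec d₁)} {X₂ : Set (Vec d₂)}
    (hX₁c : IsCompact X₁) (hX₂c : IsCompact X₂) (hp : 1 ≤ p)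
    {γ : Measure ((Vec d₁ × Vec d₂) × (Vec d₁ × Vec d₂))}
    {π ρ : Measure (Vec d₁ × Vec d₂)}
    (hγ : IsCoupling γ π ρ)
    {μ₁ : Measure (Vec d₁)} {μ₂ : Measure (Vec d₂)}
    (hπ1 : π.map Prod.fst = μ₁) (hπ2 : π.map Prod.snd = μ₂)
    (hπM : π (X₁ ×ˢ X₂)ᶜ = 0) (hρM : ρ (X₁ ×ˢ X₂)ᶜ = 0) :
    Wp p (lpDist p) μ₁ (ρ.map Prod.fst) ^ p + Wp p (lpDist p) μ₂ (ρ.map Prod.snd) ^ p ≤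
      ∫ z, prodDist p z.1 z.2 ^ p ∂γ := by
  have hp0 : (0:ℝ) ≤ p := le_trans zero_le_one hp
  haveI : IsProbabilityMeasure γ := hγ.1
  obtain ⟨hsplit, hi₁, hi₂⟩ := cost_int_split hX₁c hX₂c hp hγ hπM hρM
  -- first coordinate
  have hkey₁ : Wp p (lpDist p) μ₁ (ρ.map Prod.fst) ^ p ≤ ∫ z, lpDist p z.1.1 z.2.1 ^ p ∂γ := by
    have hm : Measurable (fun z : (Vec d₁ × Vec d₂) × (Vec d₁ × Vec d₂) => (z.1.1, z.2.1)) :=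
      (measurable_fst.fst).prodMk (measurable_snd.fst)
    have hcoup : IsCoupling (γ.map (fun z => (z.1.1, z.2.1))) μ₁ (ρ.map Prod.fst) := by
      refine ⟨Measure.isProbabilityMeasure_map hm.aemeasurable, ?_, ?_⟩
      · rw [Measure.map_map measurable_fst hm]
        have : (Prod.fst ∘ fun z : (Vec d₁ × Vec d₂) × (Vec d₁ × Vec d₂) => (z.1.1, z.2.1))
            = (Prod.fst ∘ Prod.fst) := rfl
        rw [this, ← Measure.map_map measurable_fst measurable_fst, hγ.2.1, hπ1]
      · rw [Measure.map_map measurable_snd hm]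
        have : (Prod.snd ∘ fun z : (Vec d₁ × Vec d₂) × (Vec d₁ × Vec d₂) => (z.1.1, z.2.1))
            = (Prod.fst ∘ Prod.snd) := rfl
        rw [this, ← Measure.map_map measurable_fst measurable_snd, hγ.2.2]
    have hg : Continuous (fun w : Vec d₁ × Vec d₁ => lpDist p w.1 w.2 ^ p) :=
      Continuous.rpow_const (lp_cont' hp0 continuous_fst continuous_snd) (fun _ => Or.inr hp0)
    have hint : ∫ w, lpDist p w.1 w.2 ^ p ∂(γ.map (fun z => (z.1.1, z.2.1)))
        = ∫ z, lpDist p z.1.1 z.2.1 ^ p ∂γ :=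
      integral_map hm.aemeasurable hg.aestronglyMeasurable
    have hle : Wp p (lpDist p) μ₁ (ρ.map Prod.fst)
        ≤ (∫ z, lpDist p z.1.1 z.2.1 ^ p ∂γ) ^ (1/p) := by
      rw [← hint]
      exact csInf_le (wp_bddBelow (lp_nonneg p)) ⟨_, hcoup, rfl⟩
    have hnn : (0:ℝ) ≤ ∫ z, lpDist p z.1.1 z.2.1 ^ p ∂γ :=
      integral_nonneg fun z => Real.rpow_nonneg (lp_nonneg _ _ _) _
    calc Wp p (lpDist p) μ₁ (ρ.map Prod.fst) ^ p
        ≤ ((∫ z, lpDist p z.1.1 z.2.1 ^ p ∂γ) ^ (1/p)) ^ p :=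
          Real.rpow_le_rpow (wp_nonneg' (lp_nonneg p) _ _) hle hp0
      _ = _ := rpow_invp hp hnn
  -- second coordinate
  have hkey₂ : Wp p (lpDist p) μ₂ (ρ.map Prod.snd) ^ p ≤ ∫ z, lpDist p z.1.2 z.2.2 ^ p ∂γ := by
    have hm : Measurable (fun z : (Vec d₁ × Vec d₂) × (Vec d₁ × Vec d₂) => (z.1.2, z.2.2)) :=
      (measurable_fst.snd).prodMk (measurable_snd.snd)
    have hcoup : IsCoupling (γ.map (fun z => (z.1.2, z.2.2))) μ₂ (ρ.map Prod.snd) := by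
      refine ⟨Measure.isProbabilityMeasure_map hm.aemeasurable, ?_, ?_⟩
      · rw [Measure.map_map measurable_fst hm]
        have : (Prod.fst ∘ fun z : (Vec d₁ × Vec d₂) × (Vec d₁ × Vec d₂) => (z.1.2, z.2.2))
            = (Prod.snd ∘ Prod.fst) := rfl
        rw [this, ← Measure.map_map measurable_snd measurable_fst, hγ.2.1, hπ2]
      · rw [Measure.map_map measurable_snd hm]
        have : (Prod.snd ∘ fun z : (Vec d₁ × Vec d₂) × (Vec d₁ × Vec d₂) => (z.1.2, z.2.2))
            = (Prod.snd ∘ Prod.snd) := rfl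
        rw [this, ← Measure.map_map measurable_snd measurable_snd, hγ.2.2]
    have hg : Continuous (fun w : Vec d₂ × Vec d₂ => lpDist p w.1 w.2 ^ p) :=
      Continuous.rpow_const (lp_cont' hp0 continuous_fst continuous_snd) (fun _ => Or.inr hp0)
    have hint : ∫ w, lpDist p w.1 w.2 ^ p ∂(γ.map (fun z => (z.1.2, z.2.2)))
        = ∫ z, lpDist p z.1.2 z.2.2 ^ p ∂γ :=
      integral_map hm.aemeasurable hg.aestronglyMeasurable
    have hle : Wp p (lpDist p) μ₂ (ρ.map Prod.snd)
        ≤ (∫ z, lpDist p z.1.2 z.2.2 ^ p ∂γ) ^ (1/p) := by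
      rw [← hint]
      exact csInf_le (wp_bddBelow (lp_nonneg p)) ⟨_, hcoup, rfl⟩
    have hnn : (0:ℝ) ≤ ∫ z, lpDist p z.1.2 z.2.2 ^ p ∂γ :=
      integral_nonneg fun z => Real.rpow_nonneg (lp_nonneg _ _ _) _
    calc Wp p (lpDist p) μ₂ (ρ.map Prod.snd) ^ p
        ≤ ((∫ z, lpDist p z.1.2 z.2.2 ^ p ∂γ) ^ (1/p)) ^ p :=
          Real.rpow_le_rpow (wp_nonneg' (lp_nonneg p) _ _) hle hp0
      _ = _ := rpow_invp hp hnn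
  rw [hsplit]
  exact add_le_add hkey₁ hkey₂

/-- lower bound on the Wasserstein distance over couplings -/
lemma lower_bound_W {d₁ d₂ : ℕ} {X₁ : Set (Vec d₁)} {X₂ : Set (Vec d₂)}
    (hX₁c : IsCompact X₁) (hX₂c : IsCompact X₂) (hp : 1 ≤ p)
    {π ρ : Measure (Vec d₁ × Vec d₂)}
    (hπp : IsProbabilityMeasure π) (hρp : IsProbabilityMeasure ρ)
    {μ₁ : Measure (Vec d₁)} {μ₂ : Measure (Vec d₂)}
    (hπ1 : π.map Prod.fst = μ₁) (hπ2 : π.map Prod.snd = μ₂)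
    (hπM : π (X₁ ×ˢ X₂)ᶜ = 0) (hρM : ρ (X₁ ×ˢ X₂)ᶜ = 0) :
    (Wp p (lpDist p) μ₁ (ρ.map Prod.fst) ^ p + Wp p (lpDist p) μ₂ (ρ.map Prod.snd) ^ p)
      ^ (1/p) ≤ Wp p (prodDist p) π ρ := by
  have hp0 : (0:ℝ) ≤ p := le_trans zero_le_one hp
  haveI := hπp; haveI := hρp
  have hne : {γ : Measure ((Vec d₁ × Vec d₂) × (Vec d₁ × Vec d₂)) | IsCoupling γ π ρ}.Nonempty := by
    refine ⟨π.prod ρ, inferInstance, ?_, ?_⟩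
    · rw [Measure.map_fst_prod]; simp
    · rw [Measure.map_snd_prod]; simp
  refine le_csInf (hne.image _) ?_
  rintro b ⟨γ, hγ, rfl⟩
  have hnn : (0:ℝ) ≤ Wp p (lpDist p) μ₁ (ρ.map Prod.fst) ^ p
      + Wp p (lpDist p) μ₂ (ρ.map Prod.snd) ^ p :=
    add_nonneg (Real.rpow_nonneg (wp_nonneg' (lp_nonneg p) _ _) _)
      (Real.rpow_nonneg (wp_nonneg' (lp_nonneg p) _ _) _)
  exact Real.rpow_le_rpow hnn (lower_bound hX₁c hX₂c hp hγ hπ1 hπ2 hπM hρM) (by positivity)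

end ShadowAux

/-- every shadow of ρ onto Π(μ₁,μ₂) lies in Π(μ₁,μ₂) and attains the
minimum of π ↦ W_p(π,ρ) over Π(μ₁,μ₂), with value (W_p^p(μ₁,ρ₁) + W_p^p(μ₂,ρ₂))^{1/p}. -/
theorem shadow_is_projection
    (d₁ d₂ : ℕ) (X₁ : Set (Vec d₁)) (X₂ : Set (Vec d₂))
    (hX₁c : IsCompact X₁) (hX₂c : IsCompact X₂)
    (p : ℝ) (hp : 1 ≤ p)
    (ρ : Measure (Vec d₁ × Vec d₂)) (hρ : ProbOn ρ (X₁ ×ˢ X₂))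
    (μ₁ : Measure (Vec d₁)) (μ₂ : Measure (Vec d₂))
    (hμ₁ : ProbOn μ₁ X₁) (hμ₂ : ProbOn μ₂ X₂)
    (S : Measure (Vec d₁ × Vec d₂)) (hS : IsShadow2 p ρ μ₁ μ₂ S) :
    S ∈ Pi2 μ₁ μ₂ ∧
    Wp p (prodDist p) S ρ =
      (Wp p (lpDist p) μ₁ (ρ.map Prod.fst) ^ p + Wp p (lpDist p) μ₂ (ρ.map Prod.snd) ^ p)
        ^ (1 / p) ∧
    ∀ π ∈ Pi2 μ₁ μ₂, Wp p (prodDist p) S ρ ≤ Wp p (prodDist p) π ρ := by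
  obtain ⟨κ₁, κ₂, hκ₁, hκ₂, ⟨γ₁, hγ₁f, hγ₁c, hγ₁opt⟩, ⟨γ₂, hγ₂f, hγ₂c, hγ₂opt⟩, hSf⟩ := hS
  haveI := hκ₁; haveI := hκ₂
  haveI hρprob : IsProbabilityMeasure ρ := hρ.1
  haveI := hμ₁.1; haveI := hμ₂.1
  have hp0 : (0:ℝ) ≤ p := le_trans zero_le_one hp
  have hX₁m : MeasurableSet X₁ := hX₁c.isClosed.measurableSet
  have hX₂m : MeasurableSet X₂ := hX₂c.isClosed.measurableSet
  -- Part 1: S is a coupling of μ₁ and μ₂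
  have hSprob : IsProbabilityMeasure S := by
    constructor
    rw [hSf Set.univ MeasurableSet.univ]
    simp [measure_univ]
  have hS1 : S.map Prod.fst = μ₁ := by
    apply Measure.ext
    intro B hB
    rw [Measure.map_apply measurable_fst hB, hSf _ (hB.preimage measurable_fst)]
    have hpre : (Prod.fst ⁻¹' B : Set (Vec d₁ × Vec d₂)) = B ×ˢ Set.univ := by
      ext z; simp
    have hsec : ∀ y₁ : Vec d₁, {x | (x, y₁) ∈ B ×ˢ (Set.univ : Set (Vec d₁))} = B := by
      intro y₁; ext x; simp
    calc ∫⁻ y, ((κ₁ y.1).prod (κ₂ y.2)) (Prod.fst ⁻¹' B) ∂ρ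
        = ∫⁻ y, κ₁ y.1 B ∂ρ := by
          simp only [hpre, Measure.prod_prod, measure_univ, mul_one]
      _ = ∫⁻ y₁, κ₁ y₁ B ∂(ρ.map Prod.fst) :=
          (lintegral_map (κ₁.measurable_coe hB) measurable_fst).symm
      _ = γ₁ (B ×ˢ Set.univ) := by
          rw [hγ₁f _ (hB.prod MeasurableSet.univ)]
          simp only [hsec]
      _ = μ₁ B := by
          have hpre₁ : (Prod.fst ⁻¹' B : Set (Vec d₁ × Vec d₁)) = B ×ˢ Set.univ := by
            ext z; simp
          rw [← hpre₁, ← Measure.map_apply measurable_fst hB, hγ₁c.2.1]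
  have hS2 : S.map Prod.snd = μ₂ := by
    apply Measure.ext
    intro B hB
    rw [Measure.map_apply measurable_snd hB, hSf _ (hB.preimage measurable_snd)]
    have hpre : (Prod.snd ⁻¹' B : Set (Vec d₁ × Vec d₂)) = Set.univ ×ˢ B := by
      ext z; simp
    have hpre' : (Prod.fst ⁻¹' B : Set (Vec d₂ × Vec d₂)) = B ×ˢ Set.univ := by
      ext z; simp
    have hsec : ∀ y₂ : Vec d₂, {x | (x, y₂) ∈ B ×ˢ (Set.univ : Set (Vec d₂))} = B := by
      intro y₂; ext x; simp
    calc ∫⁻ y, ((κ₁ y.1).prod (κ₂ y.2)) (Prod.snd ⁻¹' B) ∂ρ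
        = ∫⁻ y, κ₂ y.2 B ∂ρ := by
          simp only [hpre, Measure.prod_prod, measure_univ, one_mul]
      _ = ∫⁻ y₂, κ₂ y₂ B ∂(ρ.map Prod.snd) :=
          (lintegral_map (κ₂.measurable_coe hB) measurable_snd).symm
      _ = γ₂ (B ×ˢ Set.univ) := by
          rw [hγ₂f _ (hB.prod MeasurableSet.univ)]
          simp only [hsec]
      _ = μ₂ B := by
          rw [← hpre', ← Measure.map_apply measurable_fst hB, hγ₂c.2.1]
  have part1 : S ∈ Pi2 μ₁ μ₂ := ⟨hSprob, hS1, hS2⟩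
  -- concentration
  have hSM : S (X₁ ×ˢ X₂)ᶜ = 0 := conc S hS1 hS2 hX₁m hX₂m hμ₁.2 hμ₂.2
  have hρM : ρ (X₁ ×ˢ X₂)ᶜ = 0 := hρ.2
  -- the glued coupling Γ of S and ρ
  set κb : Kernel (Vec d₁ × Vec d₂) (Vec d₁ × Vec d₂) :=
    (κ₁.comap Prod.fst measurable_fst) ×ₖ (κ₂.comap Prod.snd measurable_snd) with hκb_def
  set η : Kernel (Vec d₁ × Vec d₂) ((Vec d₁ × Vec d₂) × (Vec d₁ × Vec d₂)) :=
    κb ×ₖ Kernel.id with hη_def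
  set Γ : Measure ((Vec d₁ × Vec d₂) × (Vec d₁ × Vec d₂)) := ρ.bind ⇑η with hΓdef
  have hκbap : ∀ y : Vec d₁ × Vec d₂, κb y = (κ₁ y.1).prod (κ₂ y.2) := fun y => by
    rw [hκb_def, Kernel.prod_apply, Kernel.comap_apply, Kernel.comap_apply]
  have hηap : ∀ y : Vec d₁ × Vec d₂,
      η y = ((κ₁ y.1).prod (κ₂ y.2)).prod (Measure.dirac y) := fun y => by
    rw [hη_def, Kernel.prod_apply, hκbap, Kernel.id_apply]
  have hΓa : ∀ A, MeasurableSet A →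
      Γ A = ∫⁻ y, (((κ₁ y.1).prod (κ₂ y.2)).prod (Measure.dirac y)) A ∂ρ := fun A hA => by
    rw [hΓdef, Measure.bind_apply hA η.measurable.aemeasurable]
    simp only [hηap]
  have hΓprob : IsProbabilityMeasure Γ := by
    constructor
    rw [hΓa Set.univ MeasurableSet.univ]
    simp [measure_univ]
  have hΓfst : Γ.map Prod.fst = S := by
    apply Measure.ext; intro B hB
    rw [Measure.map_apply measurable_fst hB, hΓa _ (hB.preimage measurable_fst), hSf B hB]
    have hpre : (Prod.fst ⁻¹' B :
        Set ((Vec d₁ × Vec d₂) × (Vec d₁ × Vec d₂))) = B ×ˢ Set.univ := by ext z; simp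
    simp only [hpre, Measure.prod_prod, measure_univ, mul_one]
  have hΓsnd : Γ.map Prod.snd = ρ := by
    apply Measure.ext; intro B hB
    rw [Measure.map_apply measurable_snd hB, hΓa _ (hB.preimage measurable_snd)]
    have hpre : (Prod.snd ⁻¹' B :
        Set ((Vec d₁ × Vec d₂) × (Vec d₁ × Vec d₂))) = Set.univ ×ˢ B := by ext z; simp
    calc ∫⁻ y, (((κ₁ y.1).prod (κ₂ y.2)).prod (Measure.dirac y)) (Prod.snd ⁻¹' B) ∂ρ
        = ∫⁻ y, B.indicator 1 y ∂ρ := by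
          simp only [hpre, Measure.prod_prod, measure_univ, one_mul]
          refine lintegral_congr fun y => ?_
          rw [Measure.dirac_apply' y hB]
      _ = ρ B := lintegral_indicator_one hB
  have hΓcoup : IsCoupling Γ S ρ := ⟨hΓprob, hΓfst, hΓsnd⟩
  -- projections of Γ are the optimal couplings γ₁, γ₂
  have hm₁ : Measurable (fun z : (Vec d₁ × Vec d₂) × (Vec d₁ × Vec d₂) => (z.1.1, z.2.1)) :=
    (measurable_fst.fst).prodMk (measurable_snd.fst)
  have hm₂ : Measurable (fun z : (Vec d₁ × Vec d₂) × (Vec d₁ × Vec d₂) => (z.1.2, z.2.2)) :=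
    (measurable_fst.snd).prodMk (measurable_snd.snd)
  have hproj₁ : Γ.map (fun z => (z.1.1, z.2.1)) = γ₁ := by
    apply Measure.ext; intro A hA
    rw [Measure.map_apply hm₁ hA, hΓa _ (hA.preimage hm₁), hγ₁f A hA]
    have hstep : ∀ y : Vec d₁ × Vec d₂, (((κ₁ y.1).prod (κ₂ y.2)).prod (Measure.dirac y))
        ((fun z : (Vec d₁ × Vec d₂) × (Vec d₁ × Vec d₂) => (z.1.1, z.2.1)) ⁻¹' A)
        = κ₁ y.1 {x₁ | (x₁, y.1) ∈ A} := by
      intro y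
      rw [Measure.prod_dirac, Measure.map_apply measurable_prodMk_right (hA.preimage hm₁)]
      have hset : ((fun x : Vec d₁ × Vec d₂ => (x, y)) ⁻¹'
          ((fun z : (Vec d₁ × Vec d₂) × (Vec d₁ × Vec d₂) => (z.1.1, z.2.1)) ⁻¹' A))
          = {x₁ | (x₁, y.1) ∈ A} ×ˢ Set.univ := by
        ext x; simp
      rw [hset, Measure.prod_prod, measure_univ, mul_one]
    have hmeas : Measurable (fun y₁ : Vec d₁ => κ₁ y₁ {x | (x, y₁) ∈ A}) := by
      have hfe : (fun y₁ : Vec d₁ => κ₁ y₁ {x | (x, y₁) ∈ A})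
          = fun y₁ => κ₁ y₁ (Prod.mk y₁ ⁻¹' (Prod.swap ⁻¹' A)) := by
        rfl
      rw [hfe]
      exact Kernel.measurable_kernel_prodMk_left (hA.preimage measurable_swap)
    calc ∫⁻ y, (((κ₁ y.1).prod (κ₂ y.2)).prod (Measure.dirac y))
          ((fun z : (Vec d₁ × Vec d₂) × (Vec d₁ × Vec d₂) => (z.1.1, z.2.1)) ⁻¹' A) ∂ρ
        = ∫⁻ y, κ₁ y.1 {x₁ | (x₁, y.1) ∈ A} ∂ρ := by simp only [hstep]
      _ = ∫⁻ y₁, κ₁ y₁ {x | (x, y₁) ∈ A} ∂(ρ.map Prod.fst) :=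
          (lintegral_map hmeas measurable_fst).symm
  have hproj₂ : Γ.map (fun z => (z.1.2, z.2.2)) = γ₂ := by
    apply Measure.ext; intro A hA
    rw [Measure.map_apply hm₂ hA, hΓa _ (hA.preimage hm₂), hγ₂f A hA]
    have hstep : ∀ y : Vec d₁ × Vec d₂, (((κ₁ y.1).prod (κ₂ y.2)).prod (Measure.dirac y))
        ((fun z : (Vec d₁ × Vec d₂) × (Vec d₁ × Vec d₂) => (z.1.2, z.2.2)) ⁻¹' A)
        = κ₂ y.2 {x₂ | (x₂, y.2) ∈ A} := by
      intro y
      rw [Measure.prod_dirac, Measure.map_apply measurable_prodMk_right (hA.preimage hm₂)]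
      have hset : ((fun x : Vec d₁ × Vec d₂ => (x, y)) ⁻¹'
          ((fun z : (Vec d₁ × Vec d₂) × (Vec d₁ × Vec d₂) => (z.1.2, z.2.2)) ⁻¹' A))
          = Set.univ ×ˢ {x₂ | (x₂, y.2) ∈ A} := by
        ext x; simp
      rw [hset, Measure.prod_prod, measure_univ, one_mul]
    have hmeas : Measurable (fun y₂ : Vec d₂ => κ₂ y₂ {x | (x, y₂) ∈ A}) := by
      have hfe : (fun y₂ : Vec d₂ => κ₂ y₂ {x | (x, y₂) ∈ A})
          = fun y₂ => κ₂ y₂ (Prod.mk y₂ ⁻¹' (Prod.swap ⁻¹' A)) := by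
        rfl
      rw [hfe]
      exact Kernel.measurable_kernel_prodMk_left (hA.preimage measurable_swap)
    calc ∫⁻ y, (((κ₁ y.1).prod (κ₂ y.2)).prod (Measure.dirac y))
          ((fun z : (Vec d₁ × Vec d₂) × (Vec d₁ × Vec d₂) => (z.1.2, z.2.2)) ⁻¹' A) ∂ρ
        = ∫⁻ y, κ₂ y.2 {x₂ | (x₂, y.2) ∈ A} ∂ρ := by simp only [hstep]
      _ = ∫⁻ y₂, κ₂ y₂ {x | (x, y₂) ∈ A} ∂(ρ.map Prod.snd) :=
          (lintegral_map hmeas measurable_snd).symm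
  -- the cost of Γ
  have hγ₁nn : (0:ℝ) ≤ ∫ z, lpDist p z.1 z.2 ^ p ∂γ₁ :=
    integral_nonneg fun z => Real.rpow_nonneg (lp_nonneg _ _ _) _
  have hγ₂nn : (0:ℝ) ≤ ∫ z, lpDist p z.1 z.2 ^ p ∂γ₂ :=
    integral_nonneg fun z => Real.rpow_nonneg (lp_nonneg _ _ _) _
  have hγ₁val : ∫ z, lpDist p z.1 z.2 ^ p ∂γ₁ = Wp p (lpDist p) μ₁ (ρ.map Prod.fst) ^ p := by
    rw [← hγ₁opt]; exact (rpow_invp hp hγ₁nn).symm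
  have hγ₂val : ∫ z, lpDist p z.1 z.2 ^ p ∂γ₂ = Wp p (lpDist p) μ₂ (ρ.map Prod.snd) ^ p := by
    rw [← hγ₂opt]; exact (rpow_invp hp hγ₂nn).symm
  have hg₁ : Continuous (fun w : Vec d₁ × Vec d₁ => lpDist p w.1 w.2 ^ p) :=
    Continuous.rpow_const (lp_cont' hp0 continuous_fst continuous_snd) (fun _ => Or.inr hp0)
  have hg₂ : Continuous (fun w : Vec d₂ × Vec d₂ => lpDist p w.1 w.2 ^ p) :=
    Continuous.rpow_const (lp_cont' hp0 continuous_fst continuous_snd) (fun _ => Or.inr hp0)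
  have hint₁ : ∫ z, lpDist p z.1.1 z.2.1 ^ p ∂Γ = ∫ w, lpDist p w.1 w.2 ^ p ∂γ₁ := by
    rw [← hproj₁]
    exact (integral_map hm₁.aemeasurable hg₁.aestronglyMeasurable).symm
  have hint₂ : ∫ z, lpDist p z.1.2 z.2.2 ^ p ∂Γ = ∫ w, lpDist p w.1 w.2 ^ p ∂γ₂ := by
    rw [← hproj₂]
    exact (integral_map hm₂.aemeasurable hg₂.aestronglyMeasurable).symm
  have hcostΓ : ∫ z, prodDist p z.1 z.2 ^ p ∂Γ =
      Wp p (lpDist p) μ₁ (ρ.map Prod.fst) ^ p + Wp p (lpDist p) μ₂ (ρ.map Prod.snd) ^ p := by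
    rw [(cost_int_split hX₁c hX₂c hp hΓcoup hSM hρM).1, hint₁, hint₂, hγ₁val, hγ₂val]
  -- upper bound
  have hpd_nn : ∀ x y : Vec d₁ × Vec d₂, 0 ≤ prodDist p x y := fun x y =>
    Real.rpow_nonneg (add_nonneg (Real.rpow_nonneg (lp_nonneg _ _ _) _)
      (Real.rpow_nonneg (lp_nonneg _ _ _) _)) _
  have hupper : Wp p (prodDist p) S ρ ≤
      (Wp p (lpDist p) μ₁ (ρ.map Prod.fst) ^ p + Wp p (lpDist p) μ₂ (ρ.map Prod.snd) ^ p)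
        ^ (1/p) := by
    have h : Wp p (prodDist p) S ρ ≤ (∫ z, prodDist p z.1 z.2 ^ p ∂Γ) ^ (1/p) :=
      csInf_le (wp_bddBelow hpd_nn)
        (Set.mem_image_of_mem _ (show Γ ∈ {γ | IsCoupling γ S ρ} from hΓcoup))
    rwa [hcostΓ] at h
  -- lower bound and conclusion
  have hlower := lower_bound_W hX₁c hX₂c hp hSprob hρprob hS1 hS2 hSM hρM
  have heq : Wp p (prodDist p) S ρ =
      (Wp p (lpDist p) μ₁ (ρ.map Prod.fst) ^ p + Wp p (lpDist p) μ₂ (ρ.map Prod.snd) ^ p)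
        ^ (1/p) := le_antisymm hupper hlower
  refine ⟨part1, heq, ?_⟩
  intro π hπ
  rw [heq]
  exact lower_bound_W hX₁c hX₂c hp hπ.1 hρprob hπ.2.1 hπ.2.2
    (conc π hπ.2.1 hπ.2.2 hX₁m hX₂m hμ₁.2 hμ₂.2) hρM

end
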